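/- Let F be a field and σ a ring automorphism of F[y]. Any divisor of a nonzero σ-special polynomial in F[y] is σ-special, assuming every irreducible polynomial is either σ-normal or σ-special and that σ maps irreducibles to irreducibles preserving degree. -/

import Mathlib

open Polynomial

section Aux
variable {F : Type*} [Field F] (σ : RingAut (Polynomial F))

private lemma one_apply' (x : Polynomial F) : (1 : RingAut (Polynomial F)) x = x := rfl

private lemma pow_add_apply (a b : ℤ) (x : Polynomial F) :
    (σ ^ (a + b)) x = (σ ^ a) ((σ ^ b) x) := by
  rw [zpow_add]; rfl

/-- degree preservation for all integer powers of σ, on irreducibles -/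
private lemma natDeg_pow (hirr : ∀ r : Polynomial F, Irreducible r →
      Irreducible (σ r) ∧ (σ r).natDegree = r.natDegree) :
    ∀ (m : ℤ) (q : Polynomial F), Irreducible q → ((σ ^ m) q).natDegree = q.natDegree := by
  have hnat : ∀ (n : ℕ) (q : Polynomial F), Irreducible q →
      ((σ ^ (n : ℤ)) q).natDegree = q.natDegree := by
    intro n
    induction n with
    | zero => intro q _; rw [Nat.cast_zero, zpow_zero, one_apply']
    | succ n ih =>
      intro q hq
      have h1 : ((n : ℤ) + 1) = 1 + (n : ℤ) := by ring
      push_cast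
      rw [h1, pow_add_apply]
      have hqn : Irreducible ((σ ^ (n : ℤ)) q) := hq.map (σ ^ (n : ℤ))
      have := (hirr _ hqn).2
      have h2 : (σ ^ (1 : ℤ)) ((σ ^ (n : ℤ)) q) = σ ((σ ^ (n : ℤ)) q) := by
        norm_num
      rw [h2, this, ih q hq]
  intro m q hq
  rcases m.eq_nat_or_neg with ⟨n, rfl | rfl⟩
  · exact hnat n q hq
  · have hq' : Irreducible ((σ ^ (-(n : ℤ))) q) := hq.map _
    have := hnat n _ hq'
    rw [← pow_add_apply, add_neg_cancel, zpow_zero, one_apply'] at this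
    exact this.symm
end Aux

/-- Any divisor of a nonzero σ-special polynomial is σ-special, under the
assumptions that every irreducible polynomial is either σ-normal or σ-special and
that σ maps irreducibles to irreducibles preserving degree. -/
theorem sigma_special_of_dvd (F : Type*) [Field F]
    (σ : RingAut (Polynomial F))
    (hdict : ∀ r : Polynomial F, Irreducible r →
      (∀ ℓ : ℤ, ℓ ≠ 0 → IsCoprime r ((σ ^ ℓ) r)) ∨ (∃ ℓ : ℤ, ℓ ≠ 0 ∧ r ∣ (σ ^ ℓ) r))
    (hirr : ∀ r : Polynomial F, Irreducible r →
      Irreducible (σ r) ∧ (σ r).natDegree = r.natDegree)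
    (p d : Polynomial F) (hp0 : p ≠ 0)
    (hp : ∃ ℓ : ℤ, ℓ ≠ 0 ∧ p ∣ (σ ^ ℓ) p)
    (hd : d ∣ p) :
    ∃ ℓ : ℤ, ℓ ≠ 0 ∧ d ∣ (σ ^ ℓ) d := by
  obtain ⟨ℓ0, hℓ0, hpdvd⟩ := hp
  -- Step A: p divides σ^{kℓ0} p for every natural k
  have stepA : ∀ k : ℕ, p ∣ (σ ^ ((k : ℤ) * ℓ0)) p := by
    intro k
    induction k with
    | zero => rw [Nat.cast_zero, zero_mul, zpow_zero, one_apply']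
    | succ k ih =>
      have : ((k : ℤ) + 1) * ℓ0 = (k : ℤ) * ℓ0 + ℓ0 := by ring
      push_cast
      rw [this, pow_add_apply]
      have h3 := map_dvd (σ ^ ((k : ℤ) * ℓ0)) hpdvd
      exact ih.trans h3
  -- Step B: every irreducible divisor of p is σ-special
  have special : ∀ r : Polynomial F, Irreducible r → r ∣ p →
      ∃ m : ℤ, m ≠ 0 ∧ r ∣ (σ ^ m) r := by
    intro r hr hrp
    rcases hdict r hr with Hcop | Hspec
    · exfalso
      set N := p.natDegree + 1 with hN
      set f : ℕ → Polynomial F := fun k => (σ ^ (-(k : ℤ) * ℓ0)) r with hf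
      have hfirr : ∀ k, Irreducible (f k) := fun k => hr.map _
      have hfdvd : ∀ k, f k ∣ p := by
        intro k
        have h1 : r ∣ (σ ^ ((k : ℤ) * ℓ0)) p := hrp.trans (stepA k)
        have h2 := map_dvd (σ ^ (-((k : ℤ) * ℓ0))) h1
        rw [← pow_add_apply, neg_add_cancel, zpow_zero, one_apply'] at h2
        show (σ ^ (-(k : ℤ) * ℓ0)) r ∣ p
        rw [show (-(k : ℤ)) * ℓ0 = -((k : ℤ) * ℓ0) by ring]
        exact h2
      have hcop : (↑(Finset.range N) : Set ℕ).Pairwise (Function.onFun IsCoprime f) := by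
        intro j _ k _ hjk
        have hm : ((j : ℤ) - k) * ℓ0 ≠ 0 := by
          apply mul_ne_zero _ hℓ0
          simpa [sub_eq_zero] using fun h => hjk (by exact_mod_cast h)
        have H := (Hcop _ hm).map ((σ ^ (-(j : ℤ) * ℓ0)) : Polynomial F ≃+* Polynomial F).toRingHom
        simp only [RingEquiv.toRingHom_eq_coe, RingHom.coe_coe] at H
        have e2 : (σ ^ (-(j : ℤ) * ℓ0)) ((σ ^ (((j : ℤ) - k) * ℓ0)) r)
            = (σ ^ (-(k : ℤ) * ℓ0)) r := by
          rw [← pow_add_apply]; ring_nf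
        rw [e2] at H
        exact H
      have hprod : (∏ k ∈ Finset.range N, f k) ∣ p :=
        Finset.prod_dvd_of_coprime hcop (fun k _ => hfdvd k)
      have hne : ∀ k ∈ Finset.range N, f k ≠ 0 := fun k _ => (hfirr k).ne_zero
      have hdeg : (∏ k ∈ Finset.range N, f k).natDegree
          = ∑ k ∈ Finset.range N, (f k).natDegree := natDegree_prod _ _ hne
      have hdegf : ∀ k, (f k).natDegree = r.natDegree := fun k => natDeg_pow σ hirr _ r hr
      have hrpos : 0 < r.natDegree := natDegree_pos_iff_degree_pos.2 (degree_pos_of_irreducible hr)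
      have hle : (∏ k ∈ Finset.range N, f k).natDegree ≤ p.natDegree :=
        natDegree_le_of_dvd hprod hp0
      rw [hdeg] at hle
      have : ∑ k ∈ Finset.range N, (f k).natDegree = N * r.natDegree := by
        simp [hdegf, Finset.sum_const]
      rw [this] at hle
      have : N ≤ N * r.natDegree := Nat.le_mul_of_pos_right N hrpos
      omega
    · exact Hspec
  -- Step C: upgrade: divisibility for ALL multiples of the exponent
  have specialZ : ∀ r : Polynomial F, Irreducible r → r ∣ p →
      ∃ m : ℤ, m ≠ 0 ∧ ∀ j : ℤ, r ∣ (σ ^ (j * m)) r := by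
    intro r hr hrp
    obtain ⟨m, hm0, hmdvd⟩ := special r hr hrp
    have hassoc : Associated r ((σ ^ m) r) := hr.associated_of_dvd (hr.map _) hmdvd
    have hrev : (σ ^ m) r ∣ r := hassoc.symm.dvd
    have hboth : ∀ j : ℕ, r ∣ (σ ^ ((j : ℤ) * m)) r ∧ (σ ^ ((j : ℤ) * m)) r ∣ r := by
      intro j
      induction j with
      | zero => rw [Nat.cast_zero, zero_mul, zpow_zero, one_apply']; exact ⟨dvd_rfl, dvd_rfl⟩
      | succ j ih =>
        have e : ((j : ℤ) + 1) * m = (j : ℤ) * m + m := by ring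
        constructor
        · push_cast; rw [e, pow_add_apply]
          have h3 := map_dvd (σ ^ ((j : ℤ) * m)) hmdvd
          exact ih.1.trans h3
        · push_cast; rw [e, pow_add_apply]
          exact (map_dvd (σ ^ ((j : ℤ) * m)) hrev).trans ih.2
    refine ⟨m, hm0, ?_⟩
    intro j
    rcases j.eq_nat_or_neg with ⟨n, rfl | rfl⟩
    · exact (hboth n).1
    · have h2 := map_dvd (σ ^ (-((n : ℤ) * m))) (hboth n).2
      rw [← pow_add_apply, neg_add_cancel, zpow_zero, one_apply'] at h2
      rw [show (-(n : ℤ)) * m = -((n : ℤ) * m) by ring]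
      exact h2
  -- Step D: induction on the factorization of d
  have main : ∀ e : Polynomial F, e ∣ p →
      ∃ L : ℤ, L ≠ 0 ∧ ∀ j : ℤ, e ∣ (σ ^ (j * L)) e := by
    intro e
    induction e using UniqueFactorizationMonoid.induction_on_prime with
    | h₁ =>
      intro h
      exact absurd (zero_dvd_iff.mp h) hp0
    | h₂ u hu =>
      intro _
      exact ⟨1, one_ne_zero, fun j => hu.dvd⟩
    | h₃ a q ha hq ih =>
      intro hqa
      have haq : a ∣ p := (dvd_mul_left a q).trans hqa
      have hqp : q ∣ p := (dvd_mul_right q a).trans hqa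
      obtain ⟨La, hLa0, hLa⟩ := ih haq
      obtain ⟨m, hm0, hm⟩ := specialZ q hq.irreducible hqp
      refine ⟨m * La, mul_ne_zero hm0 hLa0, fun j => ?_⟩
      have hq' : q ∣ (σ ^ (j * (m * La))) q := by
        have := hm (j * La)
        have e : j * La * m = j * (m * La) := by ring
        rwa [e] at this
      have ha' : a ∣ (σ ^ (j * (m * La))) a := by
        have := hLa (j * m)
        rwa [mul_assoc] at this
      have := mul_dvd_mul hq' ha'
      rwa [← map_mul] at this
  obtain ⟨L, hL0, hL⟩ := main d hd
  exact ⟨L, hL0, by simpa using hL 1⟩
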